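/- Let n' be an odd positive integer and suppose n' = u² − 2w² for integers u, w with w ≠ 0. Let w' be the positive odd part of w. Then the Jacobi symbol (w/n') satisfies (w'/n')·(n'/w') = 1 when all prime factors of n' are ≡ 1 mod 8, and (n'/w') = (u²/w') = 1; hence (w/n') = 1. -/

import Mathlib

lemma mod8_one (n : ℕ) (hpos : 0 < n) (hpf : ∀ q : ℕ, q.Prime → q ∣ n → q % 8 = 1) :
    n % 8 = 1 := by
  induction n using Nat.strong_induction_on with
  | _ n ih =>
    rcases eq_or_ne n 1 with rfl | h1
    · rfl
    · have hp := Nat.minFac_prime h1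
      have hd := Nat.minFac_dvd n
      have hq : n = n.minFac * (n / n.minFac) := (Nat.mul_div_cancel' hd).symm
      have hlt : n / n.minFac < n :=
        Nat.div_lt_self hpos hp.one_lt
      have hpos' : 0 < n / n.minFac := Nat.div_pos (Nat.minFac_le hpos) hp.pos
      have := ih (n / n.minFac) hlt hpos' (fun q hq' hdq =>
        hpf q hq' (hdq.trans (Nat.div_dvd_of_dvd hd)))
      have hm := hpf n.minFac hp hd
      calc n % 8 = (n.minFac % 8) * ((n / n.minFac) % 8) % 8 := by
            conv_lhs => rw [hq]
            exact Nat.mul_mod _ _ _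
        _ = 1 := by rw [hm, this]

/-- for `n' = u² − 2w²` odd positive squarefree with all prime
factors `≡ 1 mod 8` and `w ≠ 0`, with `w'` the positive odd part of `w`:
`(w'/n')·(n'/w') = 1`, `(n'/w') = 1`, hence `(w/n') = 1`. -/
theorem stmt_7 (n' : ℕ) (hodd : Odd n') (hpos : 0 < n') (hsf : Squarefree n')
    (hpf : ∀ q : ℕ, q.Prime → q ∣ n' → q % 8 = 1)
    (u w : ℤ) (hw : w ≠ 0) (hrep : (n' : ℤ) = u ^ 2 - 2 * w ^ 2) :
    jacobiSym ((ordCompl[2] w.natAbs : ℕ) : ℤ) n' *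
      jacobiSym (n' : ℤ) (ordCompl[2] w.natAbs) = 1 ∧
    jacobiSym (n' : ℤ) (ordCompl[2] w.natAbs) = 1 ∧
    jacobiSym w n' = 1 := by
  set w' : ℕ := ordCompl[2] w.natAbs with hw'def
  have hwna : w.natAbs ≠ 0 := Int.natAbs_ne_zero.mpr hw
  have hw'dvd : w' ∣ w.natAbs := Nat.ordCompl_dvd _ _
  have hw'dvdw : (w' : ℤ) ∣ w := (Int.natCast_dvd_natCast.mpr hw'dvd).trans
    (Int.natAbs_dvd.mpr dvd_rfl)
  have hn8 : n' % 8 = 1 := mod8_one n' hpos hpf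
  have hn4 : n' % 4 = 1 := by omega
  -- gcd u w' = 1
  have hgcd : Int.gcd u (w' : ℤ) = 1 := by
    by_contra hg
    obtain ⟨p, hp, hpd⟩ := Nat.exists_prime_and_dvd hg
    have hpu : (p : ℤ) ∣ u := dvd_trans (Int.natCast_dvd_natCast.mpr hpd) (Int.gcd_dvd_left _ _)
    have hpw' : (p : ℤ) ∣ (w' : ℤ) :=
      dvd_trans (Int.natCast_dvd_natCast.mpr hpd) (Int.gcd_dvd_right _ _)
    have hpw : (p : ℤ) ∣ w := hpw'.trans hw'dvdw
    have hsq : ((p : ℤ)) * p ∣ (n' : ℤ) := by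
      rw [hrep]
      exact dvd_sub (by rw [sq]; exact mul_dvd_mul hpu hpu)
        (Dvd.dvd.mul_left (by rw [sq]; exact mul_dvd_mul hpw hpw) 2)
    have : p * p ∣ n' := by exact_mod_cast hsq
    exact hp.not_isUnit (hsf p this)
  -- (n' / w') = 1
  have hw'odd : ¬ 2 ∣ w' := Nat.not_dvd_ordCompl Nat.prime_two hwna
  have hnw' : jacobiSym (n' : ℤ) w' = 1 := by
    have hmod : (n' : ℤ) ≡ u ^ 2 [ZMOD (w' : ℤ)] := by
      apply Int.ModEq.symm
      rw [Int.modEq_iff_dvd, hrep]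
      have : (w' : ℤ) ∣ w ^ 2 := dvd_pow hw'dvdw two_ne_zero
      have h2 : (w' : ℤ) ∣ 2 * w ^ 2 := this.mul_left 2
      convert h2.neg_right using 1
      · rfl
      · ring
    rw [jacobiSym.mod_left' hmod]
    exact jacobiSym.sq_one' (by simpa using hgcd)
  have hrec : jacobiSym (n' : ℤ) w' = jacobiSym (w' : ℤ) n' :=
    jacobiSym.quadratic_reciprocity_one_mod_four hn4 (Nat.odd_iff.mpr (by omega))
  have hw'n : jacobiSym (w' : ℤ) n' = 1 := hrec ▸ hnw'
  refine ⟨by rw [hw'n, hnw']; ring, hnw', ?_⟩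
  have h2n : jacobiSym 2 n' = 1 := by
    rw [jacobiSym.at_two hodd, ZMod.χ₈_nat_eq_if_mod_eight]
    have : n' % 2 = 1 := by omega
    simp [hn8, this]
  have hneg1 : jacobiSym (-1) n' = 1 := by
    rw [jacobiSym.at_neg_one hodd]
    exact_mod_cast ZMod.χ₄_nat_one_mod_four hn4
  have habs : jacobiSym ((w.natAbs : ℕ) : ℤ) n' = 1 := by
    have hfac : w.natAbs = 2 ^ (w.natAbs.factorization 2) * w' :=
      (Nat.ordProj_mul_ordCompl_eq_self _ _).symm
    rw [hfac]
    push_cast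
    rw [jacobiSym.mul_left, jacobiSym.pow_left, h2n, hw'n, one_pow, one_mul]
  rcases Int.natAbs_eq w with h | h
  · rw [h] at habs ⊢; exact habs
  · rw [h, jacobiSym.neg _ hodd, ← jacobiSym.at_neg_one hodd, hneg1, one_mul]
    exact habs
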